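/- arXiv:2311.08594 — 2 statements merged into one kernel-verified Lean document; each statement's English description precedes it below -/
import Mathlib

section
/- Let p(θ_{1:T}) be a Wiener process with standard deviation σ_θ (i.e., θ_1 ~ N(0, σ_θ²) and θ_t | θ_{t-1} ~ N(θ_{t-1}, σ_θ²)), and define q(θ_{1:T}) ∝ p(θ_{1:T}) · ∏_{t=1}^T exp{-((θ_t - μ_t)/σ_t)²/2} for reals μ_1,...,μ_T and positive reals σ_1,...,σ_T. Then q is a Linear Gaussian Model: θ_t | θ_{t-1} ~ N(μ̃_t, σ̃_t²) with σ̃_t = σ_θ√(1-ρ_t) and μ̃_t = (λ_θ θ_{t-1} + λ_t μ_t + ρ_{t+1} λ_θ τ_{t+1}) / (λ_θ + λ_t + ρ_{t+1} λ_θ), where λ_θ = 1/σ_θ², λ_t = 1/σ_t², and ρ_t, τ_t satisfy the backward recursions ρ_t = (λ_t + ρ_{t+1}λ_θ)/(λ_θ + λ_t + ρ_{t+1}λ_θ) with ρ_{T+1}=0, and τ_t = (λ_t μ_t + ρ_{t+1}λ_θ τ_{t+1})/(λ_t + ρ_{t+1}λ_θ) with τ_{T+1}=0 (using the convention θ_0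 = 0). -/
open Finset

/-- Univariate Gaussian density with mean `m` and variance `v`. -/
noncomputable def gaussDensity (x m v : ℝ) : ℝ :=
  (Real.sqrt (2 * Real.pi * v))⁻¹ * Real.exp (-(x - m) ^ 2 / (2 * v))

lemma keyterm (x y m s σθ r2 t2 ρt τt : ℝ) (hσθ : 0 < σθ) (hs : 0 < s) (hr2 : 0 ≤ r2)
    (hρt : ρt = (1 / s ^ 2 + r2 * (1 / σθ ^ 2)) /
            (1 / σθ ^ 2 + 1 / s ^ 2 + r2 * (1 / σθ ^ 2)))
    (hτt : τt = ((1 / s ^ 2) * m + r2 * (1 / σθ ^ 2) * t2) /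
            (1 / s ^ 2 + r2 * (1 / σθ ^ 2))) :
    gaussDensity x y (σθ ^ 2) * Real.exp (-((x - m) / s) ^ 2 / 2) =
    (Real.sqrt (1 - ρt) *
        Real.exp (-(1 / s ^ 2) * m ^ 2 / 2
          + ((1 / s ^ 2) * m + r2 * (1 / σθ ^ 2) * t2) ^ 2 /
              (2 * (1 / σθ ^ 2 + 1 / s ^ 2 + r2 * (1 / σθ ^ 2)))
          - r2 * (1 / σθ ^ 2) / 2 * t2 ^ 2
          + ρt * (1 / σθ ^ 2) / 2 * τt ^ 2)) *
      (gaussDensity x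
          (((1 / σθ ^ 2) * y + (1 / s ^ 2) * m + r2 * (1 / σθ ^ 2) * t2) /
            (1 / σθ ^ 2 + 1 / s ^ 2 + r2 * (1 / σθ ^ 2)))
          ((σθ * Real.sqrt (1 - ρt)) ^ 2) *
        Real.exp (r2 * (1 / σθ ^ 2) / 2 * (x - t2) ^ 2
          - ρt * (1 / σθ ^ 2) / 2 * (y - τt) ^ 2)) := by
  have hσ2 : (0:ℝ) < σθ ^ 2 := by positivity
  have hL : (0:ℝ) < 1 / σθ ^ 2 := by positivity
  have hl : (0:ℝ) < 1 / s ^ 2 := by positivity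
  have hrL : (0:ℝ) ≤ r2 * (1 / σθ ^ 2) := mul_nonneg hr2 hL.le
  have hD : (0:ℝ) < 1 / σθ ^ 2 + 1 / s ^ 2 + r2 * (1 / σθ ^ 2) := by linarith
  have hbpos : (0:ℝ) < 1 / s ^ 2 + r2 * (1 / σθ ^ 2) := by linarith
  have h1ρ : 1 - ρt = (1 / σθ ^ 2) / (1 / σθ ^ 2 + 1 / s ^ 2 + r2 * (1 / σθ ^ 2)) := by
    rw [hρt]; field_simp; ring
  have h1ρpos : 0 < 1 - ρt := by rw [h1ρ]; positivity
  have hVar : (σθ * Real.sqrt (1 - ρt)) ^ 2 = σθ ^ 2 * (1 - ρt) := by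
    rw [mul_pow, Real.sq_sqrt h1ρpos.le]
  have hvar2 : σθ ^ 2 * (1 - ρt) = 1 / (1 / σθ ^ 2 + 1 / s ^ 2 + r2 * (1 / σθ ^ 2)) := by
    rw [h1ρ]; field_simp
  have hexp : -(x - y) ^ 2 / (2 * σθ ^ 2) + -((x - m) / s) ^ 2 / 2
      = (-(1 / s ^ 2) * m ^ 2 / 2
          + ((1 / s ^ 2) * m + r2 * (1 / σθ ^ 2) * t2) ^ 2 /
              (2 * (1 / σθ ^ 2 + 1 / s ^ 2 + r2 * (1 / σθ ^ 2)))
          - r2 * (1 / σθ ^ 2) / 2 * t2 ^ 2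
          + ρt * (1 / σθ ^ 2) / 2 * τt ^ 2)
        + -(x - ((1 / σθ ^ 2) * y + (1 / s ^ 2) * m + r2 * (1 / σθ ^ 2) * t2) /
            (1 / σθ ^ 2 + 1 / s ^ 2 + r2 * (1 / σθ ^ 2))) ^ 2 /
              (2 * (σθ ^ 2 * (1 - ρt)))
        + (r2 * (1 / σθ ^ 2) / 2 * (x - t2) ^ 2
          - ρt * (1 / σθ ^ 2) / 2 * (y - τt) ^ 2) := by
    rw [hvar2]
    subst hρt hτt
    field_simp
    ring
  have h2 := congrArg Real.exp hexp
  rw [Real.exp_add, Real.exp_add, Real.exp_add] at h2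
  unfold gaussDensity
  rw [hVar]
  have hnorm : (Real.sqrt (2 * Real.pi * σθ ^ 2))⁻¹
      = Real.sqrt (1 - ρt) * (Real.sqrt (2 * Real.pi * (σθ ^ 2 * (1 - ρt))))⁻¹ := by
    rw [show 2 * Real.pi * (σθ ^ 2 * (1 - ρt)) = 2 * Real.pi * σθ ^ 2 * (1 - ρt) by ring,
      Real.sqrt_mul (by positivity), mul_inv]
    have hne : Real.sqrt (1 - ρt) ≠ 0 := ne_of_gt (Real.sqrt_pos.mpr h1ρpos)
    field_simp
    rw [Real.sqrt_mul (by positivity : (0:ℝ) ≤ 2 * Real.pi * σθ ^ 2),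
      Real.sqrt_mul (by positivity : (0:ℝ) ≤ 2 * Real.pi)]
  rw [hnorm]
  linear_combination (Real.sqrt (1 - ρt) *
    (Real.sqrt (2 * Real.pi * (σθ ^ 2 * (1 - ρt))))⁻¹) * h2
/-- **Theorem 1 (VTIRT).** Attaching Gaussian ability potentials to a discrete-time
Wiener-process prior yields (up to normalization) a Linear Gaussian Model whose
conditional means and standard deviations are given by the backward recursions
for `ρ` and `τ`. -/
theorem wiener_with_gaussian_potentials_is_lgm
    (T : ℕ) (σθ : ℝ) (hσθ : 0 < σθ)
    (μ σ : ℕ → ℝ) (hσ : ∀ t, 1 ≤ t → t ≤ T → 0 < σ t)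
    (ρ τ : ℕ → ℝ)
    (hρT : ρ (T + 1) = 0) (hτT : τ (T + 1) = 0)
    (hρ : ∀ t, 1 ≤ t → t ≤ T →
      ρ t = (1 / (σ t) ^ 2 + ρ (t + 1) * (1 / σθ ^ 2)) /
            (1 / σθ ^ 2 + 1 / (σ t) ^ 2 + ρ (t + 1) * (1 / σθ ^ 2)))
    (hτ : ∀ t, 1 ≤ t → t ≤ T →
      τ t = ((1 / (σ t) ^ 2) * μ t + ρ (t + 1) * (1 / σθ ^ 2) * τ (t + 1)) /
            (1 / (σ t) ^ 2 + ρ (t + 1) * (1 / σθ ^ 2))) :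
    ∃ c : ℝ, 0 < c ∧ ∀ θ : ℕ → ℝ, θ 0 = 0 →
      (∏ t ∈ Finset.Icc 1 T, gaussDensity (θ t) (θ (t - 1)) (σθ ^ 2)) *
        (∏ t ∈ Finset.Icc 1 T, Real.exp (-((θ t - μ t) / σ t) ^ 2 / 2)) =
      c * ∏ t ∈ Finset.Icc 1 T,
        gaussDensity (θ t)
          (((1 / σθ ^ 2) * θ (t - 1) + (1 / (σ t) ^ 2) * μ t
              + ρ (t + 1) * (1 / σθ ^ 2) * τ (t + 1)) /
            (1 / σθ ^ 2 + 1 / (σ t) ^ 2 + ρ (t + 1) * (1 / σθ ^ 2)))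
          ((σθ * Real.sqrt (1 - ρ t)) ^ 2) := by
  have hL : (0:ℝ) < 1 / σθ ^ 2 := by positivity
  -- bounds on ρ
  have hbound : ∀ k : ℕ, k ≤ T → 0 ≤ ρ (T + 1 - k) ∧ ρ (T + 1 - k) < 1 := by
    intro k
    induction k with
    | zero => intro _; rw [Nat.sub_zero, hρT]; exact ⟨le_refl 0, zero_lt_one⟩
    | succ k ih =>
      intro hk
      obtain ⟨h0, _⟩ := ih (Nat.le_of_succ_le hk)
      have ht1 : 1 ≤ T - k := by omega
      have ht2 : T - k ≤ T := by omega
      have heq : T + 1 - (k + 1) = T - k := by omega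
      have hsucc : T - k + 1 = T + 1 - k := by omega
      rw [heq, hρ (T - k) ht1 ht2, hsucc]
      have hsp := hσ (T - k) ht1 ht2
      have hl : (0:ℝ) < 1 / σ (T - k) ^ 2 := by positivity
      have hnn : (0:ℝ) ≤ ρ (T + 1 - k) * (1 / σθ ^ 2) := mul_nonneg h0 hL.le
      constructor
      · exact div_nonneg (by linarith) (by linarith)
      · rw [div_lt_one (by linarith)]; linarith
  have hρbd : ∀ t, 1 ≤ t → t ≤ T + 1 → 0 ≤ ρ t ∧ ρ t < 1 := by
    intro t h1 h2
    have := hbound (T + 1 - t) (by omega)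
    rwa [show T + 1 - (T + 1 - t) = t by omega] at this
  refine ⟨(∏ t ∈ Finset.Icc 1 T,
      Real.sqrt (1 - ρ t) *
        Real.exp (-(1 / (σ t) ^ 2) * (μ t) ^ 2 / 2
          + ((1 / (σ t) ^ 2) * μ t + ρ (t + 1) * (1 / σθ ^ 2) * τ (t + 1)) ^ 2 /
              (2 * (1 / σθ ^ 2 + 1 / (σ t) ^ 2 + ρ (t + 1) * (1 / σθ ^ 2)))
          - ρ (t + 1) * (1 / σθ ^ 2) / 2 * (τ (t + 1)) ^ 2
          + ρ t * (1 / σθ ^ 2) / 2 * (τ t) ^ 2)) *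
      Real.exp (-(ρ 1 * (1 / σθ ^ 2) / 2 * ((0:ℝ) - τ 1) ^ 2)), ?_, ?_⟩
  · refine mul_pos (Finset.prod_pos ?_) (Real.exp_pos _)
    intro t ht
    simp only [Finset.mem_Icc] at ht
    have h1 := (hρbd t ht.1 (by omega)).2
    exact mul_pos (Real.sqrt_pos.mpr (by linarith)) (Real.exp_pos _)
  · intro θ hθ0
    set F : ℕ → ℝ := fun i => ρ (i + 1) * (1 / σθ ^ 2) / 2 * (θ i - τ (i + 1)) ^ 2 with hF
    have hstep : ∀ t ∈ Finset.Icc 1 T,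
        gaussDensity (θ t) (θ (t - 1)) (σθ ^ 2) *
            Real.exp (-((θ t - μ t) / σ t) ^ 2 / 2)
        = (Real.sqrt (1 - ρ t) *
            Real.exp (-(1 / (σ t) ^ 2) * (μ t) ^ 2 / 2
              + ((1 / (σ t) ^ 2) * μ t + ρ (t + 1) * (1 / σθ ^ 2) * τ (t + 1)) ^ 2 /
                  (2 * (1 / σθ ^ 2 + 1 / (σ t) ^ 2 + ρ (t + 1) * (1 / σθ ^ 2)))
              - ρ (t + 1) * (1 / σθ ^ 2) / 2 * (τ (t + 1)) ^ 2
              + ρ t * (1 / σθ ^ 2) / 2 * (τ t) ^ 2)) *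
          (gaussDensity (θ t)
              (((1 / σθ ^ 2) * θ (t - 1) + (1 / (σ t) ^ 2) * μ t
                  + ρ (t + 1) * (1 / σθ ^ 2) * τ (t + 1)) /
                (1 / σθ ^ 2 + 1 / (σ t) ^ 2 + ρ (t + 1) * (1 / σθ ^ 2)))
              ((σθ * Real.sqrt (1 - ρ t)) ^ 2) *
            Real.exp (F t - F (t - 1))) := by
      intro t ht
      simp only [Finset.mem_Icc] at ht
      have hone : t - 1 + 1 = t := by omega
      have hFt : F t - F (t - 1)
          = ρ (t + 1) * (1 / σθ ^ 2) / 2 * (θ t - τ (t + 1)) ^ 2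
            - ρ t * (1 / σθ ^ 2) / 2 * (θ (t - 1) - τ t) ^ 2 := by
        simp only [hF]; rw [hone]
      rw [hFt]
      exact keyterm (θ t) (θ (t - 1)) (μ t) (σ t) σθ (ρ (t + 1)) (τ (t + 1)) (ρ t) (τ t)
        hσθ (hσ t ht.1 ht.2) (hρbd (t + 1) (by omega) (by omega)).1
        (hρ t ht.1 ht.2) (hτ t ht.1 ht.2)
    rw [← Finset.prod_mul_distrib, Finset.prod_congr rfl hstep, Finset.prod_mul_distrib]
    have hsplit : ∀ g : ℕ → ℝ,
        (∏ t ∈ Finset.Icc 1 T, (g t * Real.exp (F t - F (t - 1))))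
        = (∏ t ∈ Finset.Icc 1 T, g t) *
            Real.exp (∑ t ∈ Finset.Icc 1 T, (F t - F (t - 1))) := by
      intro g; rw [Finset.prod_mul_distrib, ← Real.exp_sum]
    rw [hsplit]
    have hsum : (∑ t ∈ Finset.Icc 1 T, (F t - F (t - 1)))
        = -(ρ 1 * (1 / σθ ^ 2) / 2 * ((0:ℝ) - τ 1) ^ 2) := by
      rw [← Finset.Ico_add_one_right_eq_Icc, Finset.sum_Ico_eq_sum_range]
      simp only [Nat.add_sub_cancel]
      have hterm : ∀ i ∈ Finset.range T, F (1 + i) - F (1 + i - 1) = F (i + 1) - F i := by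
        intro i _
        have e1 : 1 + i = i + 1 := Nat.add_comm 1 i
        have e2 : 1 + i - 1 = i := by omega
        rw [e2, e1]
      rw [Finset.sum_congr rfl hterm, Finset.sum_range_sub]
      have hFT : F T = 0 := by simp [hF, hρT]
      have hF0 : F 0 = ρ 1 * (1 / σθ ^ 2) / 2 * ((0:ℝ) - τ 1) ^ 2 := by
        simp only [hF, Nat.zero_add, hθ0]
      rw [hFT, hF0]; ring
    rw [hsum]
    ring
end

section
/- Expanding the quadratic form: for real numbers θ_0 = 0, θ_1, ..., θ_T, σ_θ > 0, σ_t > 0, μ_t, the expression ∑_{t=1}^T [((θ_t - θ_{t-1})/σ_θ)² + ((θ_t - μ_t)/σ_t)²] can be written as ∑_{t=1}^T ((θ_t - α_t θ_{t-1} - β_t)/s_t)² + C for constants α_t, β_t, s_t, C not depending on θ_{1:T}, where s_t = σ_θ√(α_t) and α_t, β_t satisfy the backward recursions α_t = λ_θ/(λ_θ + λ_t + (1-α_{t+1})λ_θ), β_t = (μ_t λ_t + β_{t+1}λ_θ)/(λ_θ + λ_t + (1-α_{t+1})λ_θ) with α_{T+1} = 1, β_{T+1} = 0. -/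
open Finset

/-- Completion-of-squares identity at the heart of Theorem 1's proof: with `α, β`
given by the backward recursions and `s t = σθ * √(α t)`, the sum of the
prior-transition quadratics and the local-potential quadratics equals a sum of new
transition quadratics plus a constant `C` not depending on `θ`. -/
theorem completion_of_squares (T : ℕ) (σθ : ℝ) (hσθ : 0 < σθ)
    (σ μ : ℕ → ℝ) (hσ : ∀ t, 1 ≤ t → t ≤ T → 0 < σ t)
    (α β : ℕ → ℝ) (hαT : α (T + 1) = 1) (hβT : β (T + 1) = 0)
    (hα : ∀ t, 1 ≤ t → t ≤ T →
      α t = (1 / σθ ^ 2) /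
        (1 / σθ ^ 2 + 1 / (σ t) ^ 2 + (1 - α (t + 1)) * (1 / σθ ^ 2)))
    (hβ : ∀ t, 1 ≤ t → t ≤ T →
      β t = (μ t * (1 / (σ t) ^ 2) + β (t + 1) * (1 / σθ ^ 2)) /
        (1 / σθ ^ 2 + 1 / (σ t) ^ 2 + (1 - α (t + 1)) * (1 / σθ ^ 2)))
    (s : ℕ → ℝ) (hs : ∀ t, s t = σθ * Real.sqrt (α t)) :
    ∃ C : ℝ, ∀ θ : ℕ → ℝ, θ 0 = 0 →
      ∑ t ∈ Finset.Icc 1 T,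
          (((θ t - θ (t - 1)) / σθ) ^ 2 + ((θ t - μ t) / σ t) ^ 2) =
        (∑ t ∈ Finset.Icc 1 T, ((θ t - α t * θ (t - 1) - β t) / s t) ^ 2) + C := by
  have hlamth : (0:ℝ) < 1 / σθ ^ 2 := by positivity
  have aux : ∀ n, n ≤ T → (0 < α (T + 1 - n) ∧ α (T + 1 - n) ≤ 1) ∧ ∃ C : ℝ,
      ∀ θ : ℕ → ℝ,
        ∑ t ∈ Finset.Icc (T + 1 - n) T,
            (((θ t - θ (t - 1)) / σθ) ^ 2 + ((θ t - μ t) / σ t) ^ 2) =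
          (∑ t ∈ Finset.Icc (T + 1 - n) T,
              ((θ t - α t * θ (t - 1) - β t) / s t) ^ 2)
            + (1 - α (T + 1 - n)) * (1 / σθ ^ 2) * (θ (T - n)) ^ 2
            - 2 * (1 / σθ ^ 2) * β (T + 1 - n) * (θ (T - n)) + C := by
    intro n
    induction n with
    | zero =>
      intro _
      refine ⟨by simp [hαT], 0, fun θ => ?_⟩
      have he : Finset.Icc (T + 1 - 0) T = ∅ := by
        apply Finset.Icc_eq_empty; omega
      simp [he, hαT, hβT]
    | succ n ih =>
      intro hn1
      have hn : n ≤ T := by omega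
      obtain ⟨⟨hpos', hle'⟩, C', hC'⟩ := ih hn
      set k := T - n with hk
      have hk1 : 1 ≤ k := by omega
      have hkT : k ≤ T := by omega
      have hkk : T + 1 - (n + 1) = k := by omega
      have hkk2 : T - (n + 1) = k - 1 := by omega
      have hkk3 : T + 1 - n = k + 1 := by omega
      rw [hkk, hkk2]
      rw [hkk3] at hpos' hle' hC'
      have hσk : 0 < σ k := hσ k hk1 hkT
      have hΛpos : 0 < 1 / σθ ^ 2 + 1 / (σ k) ^ 2 + (1 - α (k + 1)) * (1 / σθ ^ 2) := by
        have h2 : (0:ℝ) < 1 / (σ k) ^ 2 := by positivity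
        nlinarith
      have h1 : α k * (1 / σθ ^ 2 + 1 / (σ k) ^ 2 + (1 - α (k + 1)) * (1 / σθ ^ 2))
          = 1 / σθ ^ 2 := by
        rw [hα k hk1 hkT, div_mul_cancel₀ _ (ne_of_gt hΛpos)]
      have h2 : β k * (1 / σθ ^ 2 + 1 / (σ k) ^ 2 + (1 - α (k + 1)) * (1 / σθ ^ 2))
          = μ k * (1 / (σ k) ^ 2) + β (k + 1) * (1 / σθ ^ 2) := by
        rw [hβ k hk1 hkT, div_mul_cancel₀ _ (ne_of_gt hΛpos)]
      have hαkpos : 0 < α k := by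
        rw [hα k hk1 hkT]; positivity
      have hαkle : α k ≤ 1 := by
        rw [hα k hk1 hkT]
        rw [div_le_one hΛpos]
        have h2 : (0:ℝ) < 1 / (σ k) ^ 2 := by positivity
        nlinarith
      have hsk2 : (s k) ^ 2 = σθ ^ 2 * α k := by
        rw [hs k, mul_pow, Real.sq_sqrt hαkpos.le]
      have hskne : (s k) ^ 2 ≠ 0 := by
        rw [hsk2]; positivity
      have h3 : 1 / (s k) ^ 2
          = 1 / σθ ^ 2 + 1 / (σ k) ^ 2 + (1 - α (k + 1)) * (1 / σθ ^ 2) := by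
        have hm : (σθ ^ 2 * α k) *
            (1 / σθ ^ 2 + 1 / (σ k) ^ 2 + (1 - α (k + 1)) * (1 / σθ ^ 2)) = 1 := by
          have : (σθ ^ 2 * α k) *
              (1 / σθ ^ 2 + 1 / (σ k) ^ 2 + (1 - α (k + 1)) * (1 / σθ ^ 2))
              = σθ ^ 2 * (α k * (1 / σθ ^ 2 + 1 / (σ k) ^ 2 + (1 - α (k + 1)) * (1 / σθ ^ 2))) := by
            ring
          rw [this, h1]
          field_simp
        rw [hsk2]
        exact (eq_one_div_of_mul_eq_one_left (by linear_combination hm)).symm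
      refine ⟨⟨hαkpos, hαkle⟩, C' + ((1 / (σ k) ^ 2) * (μ k) ^ 2
        - (1 / σθ ^ 2 + 1 / (σ k) ^ 2 + (1 - α (k + 1)) * (1 / σθ ^ 2)) * (β k) ^ 2),
        fun θ => ?_⟩
      have hins : Finset.Icc k T = insert k (Finset.Icc (k + 1) T) := by
        rw [Finset.Icc_add_one_left_eq_Ioc, Finset.Ioc_insert_left hkT]
      have hnotmem : k ∉ Finset.Icc (k + 1) T := by simp
      rw [hins, Finset.sum_insert hnotmem, Finset.sum_insert hnotmem, hC' θ]
      have key : ((θ k - θ (k - 1)) / σθ) ^ 2 + ((θ k - μ k) / σ k) ^ 2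
            + ((1 - α (k + 1)) * (1 / σθ ^ 2) * (θ k) ^ 2
              - 2 * (1 / σθ ^ 2) * β (k + 1) * (θ k))
          = ((θ k - α k * θ (k - 1) - β k) / s k) ^ 2
            + ((1 - α k) * (1 / σθ ^ 2) * (θ (k - 1)) ^ 2
              - 2 * (1 / σθ ^ 2) * β k * (θ (k - 1)))
            + ((1 / (σ k) ^ 2) * (μ k) ^ 2
              - (1 / σθ ^ 2 + 1 / (σ k) ^ 2 + (1 - α (k + 1)) * (1 / σθ ^ 2)) * (β k) ^ 2) := by
        have hσθne : σθ ≠ 0 := ne_of_gt hσθ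
        have hσkne : σ k ≠ 0 := ne_of_gt hσk
        have hskne' : s k ≠ 0 := by
          intro h; apply hskne; rw [h]; ring
        set x := θ k
        set y := θ (k - 1)
        rw [div_pow, div_pow, div_pow]
        linear_combination (2 * x * y - α k * y ^ 2 - 2 * β k * y) * h1 + (2 * x) * h2
          - (x - α k * y - β k) ^ 2 * h3
      linarith [key]
  obtain ⟨⟨_, _⟩, C, hC⟩ := aux T (le_refl T)
  have e1 : T + 1 - T = 1 := by omega
  have e2 : T - T = 0 := by omega
  rw [e1, e2] at hC
  refine ⟨C, fun θ hθ0 => ?_⟩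
  have := hC θ
  rw [hθ0] at this
  linarith [this]
end
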